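/- arXiv:0704.0783 — 2 statements merged into one kernel-verified Lean document; each statement's English description precedes it below -/
import Mathlib

section
/- Positivity of the upwind convection operator: let u_h ∈ RT₀ be such that the (constant) divergence of u_h on each triangle is nonnegative, i.e. div(u_h|_K) ≥ 0 for every K ∈ 𝒯_h. Then for every v_h ∈ P₀ one has b_h(u_h, v_h, v_h) ≥ 0. -/
open scoped RealInnerProductSpace
open MeasureTheory

attribute [local instance] Classical.propDecidable

noncomputable section

/-- The Euclidean plane. -/
abbrev E2 : Type := EuclideanSpace ℝ (Fin 2)

/-- A nondegenerate (closed) triangle of the plane, given by its three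
affinely independent vertices. -/
structure Tri : Type where
  vtx : Fin 3 → E2
  indep : AffineIndependent ℝ vtx

namespace Tri

/-- The triangle as a subset of the plane: the convex hull of its vertices. -/
def carrier (t : Tri) : Set E2 := convexHull ℝ (Set.range t.vtx)

/-- The area `|K|` of the triangle. -/
def area (t : Tri) : ℝ := (volume t.carrier).toReal

/-- The centroid of the triangle. -/
def centroid (t : Tri) : E2 := Finset.centroid ℝ Finset.univ t.vtx

/-- The triangle seen as a 2-simplex. -/
def simplex (t : Tri) : Affine.Simplex ℝ E2 2 := ⟨t.vtx, t.indep⟩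

/-- The circumcenter `x_K` of the triangle. -/
def ccenter (t : Tri) : E2 := t.simplex.circumcenter

/-- `σ` (an ordered pair of distinct points) is an edge of the triangle `t`:
both of its endpoints are vertices of `t`. -/
def hasEdge (t : Tri) (σ : E2 × E2) : Prop :=
  σ.1 ≠ σ.2 ∧ σ.1 ∈ Set.range t.vtx ∧ σ.2 ∈ Set.range t.vtx

end Tri

/-- The segment of an edge. -/
def eseg (σ : E2 × E2) : Set E2 := segment ℝ σ.1 σ.2

/-- The length `|σ|` of an edge. -/
def elen (σ : E2 × E2) : ℝ := dist σ.1 σ.2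

/-- The midpoint `x_σ` of an edge. -/
def emid (σ : E2 × E2) : E2 := midpoint ℝ σ.1 σ.2

/-- Rotation by `π/2` in the plane. -/
def perp (x : E2) : E2 := (EuclideanSpace.equiv (Fin 2) ℝ).symm ![-(x 1), x 0]

/-- The unit normal `n_{K,σ}` to the edge `σ`, pointing outward of the triangle `t`. -/
def Tri.nrm (t : Tri) (σ : E2 × E2) : E2 :=
  if 0 ≤ ⟪perp (σ.2 - σ.1), emid σ - t.centroid⟫
  then (elen σ)⁻¹ • perp (σ.2 - σ.1)
  else -((elen σ)⁻¹ • perp (σ.2 - σ.1))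

/-- An admissible triangulation `𝒯_h` of `Ω`, together with a registration of its
edges (each geometric edge is recorded once, with a chosen orientation) and a labelling
`K_σ`, `L_σ` of the triangle(s) adjacent to each edge.  All interior angles of all
triangles are `< π/2`. -/
structure Mesh (Ω : Set E2) : Type where
  tris : Finset Tri
  tris_nonempty : tris.Nonempty
  edges : Finset (E2 × E2)
  Kof : E2 × E2 → Tri
  Lof : E2 × E2 → Tri
  interior_disjoint : ∀ t₁ ∈ tris, ∀ t₂ ∈ tris, t₁ ≠ t₂ →
    interior t₁.carrier ∩ interior t₂.carrier = ∅
  union_eq : ⋃ t ∈ (tris : Set Tri), t.carrier = closure Ω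
  inter_structure : ∀ t₁ ∈ tris, ∀ t₂ ∈ tris, t₁ ≠ t₂ →
    t₁.carrier ∩ t₂.carrier = ∅
    ∨ (∃ a ∈ Set.range t₁.vtx ∩ Set.range t₂.vtx, t₁.carrier ∩ t₂.carrier = {a})
    ∨ (∃ σ, t₁.hasEdge σ ∧ t₂.hasEdge σ ∧ t₁.carrier ∩ t₂.carrier = eseg σ)
  angles_lt : ∀ t ∈ tris, ∀ i j l : Fin 3, i ≠ j → i ≠ l → j ≠ l →
    EuclideanGeometry.angle (t.vtx j) (t.vtx i) (t.vtx l) < Real.pi / 2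
  edges_ne : ∀ σ ∈ edges, σ.1 ≠ σ.2
  edges_cover : ∀ t ∈ tris, ∀ i j : Fin 3, i ≠ j →
    (t.vtx i, t.vtx j) ∈ edges ∨ (t.vtx j, t.vtx i) ∈ edges
  edges_sub : ∀ σ ∈ edges, ∃ t ∈ tris, t.hasEdge σ
  edges_orient : ∀ σ ∈ edges, Prod.swap σ ∉ edges
  edges_atMostTwo : ∀ σ ∈ edges, (tris.filter fun t => t.hasEdge σ).card ≤ 2
  Kof_mem : ∀ σ ∈ edges, Kof σ ∈ tris ∧ (Kof σ).hasEdge σ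
  Lof_mem : ∀ σ ∈ edges, (tris.filter fun t => t.hasEdge σ).card = 2 →
    Lof σ ∈ tris ∧ (Lof σ).hasEdge σ ∧ Lof σ ≠ Kof σ
  ext_frontier : ∀ σ ∈ edges, (tris.filter fun t => t.hasEdge σ).card = 1 →
    eseg σ ⊆ frontier Ω

namespace Mesh

variable {Ω : Set E2} (M : Mesh Ω)

/-- The interior edges `ℰ_h^int` (shared by exactly two triangles). -/
def intEdges : Finset (E2 × E2) :=
  M.edges.filter fun σ => (M.tris.filter fun t => t.hasEdge σ).card = 2

/-- The boundary edges `ℰ_h^ext`. -/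
def extEdges : Finset (E2 × E2) :=
  M.edges.filter fun σ => (M.tris.filter fun t => t.hasEdge σ).card = 1

/-- `d_σ`: distance between the circumcenters of the two triangles sharing `σ`
(interior edges), or from the circumcenter of `K_σ` to the midpoint of `σ`
(boundary edges). -/
def dOf (σ : E2 × E2) : ℝ :=
  if (M.tris.filter fun t => t.hasEdge σ).card = 2
  then dist (M.Kof σ).ccenter (M.Lof σ).ccenter
  else dist (M.Kof σ).ccenter (emid σ)

/-- `τ_σ = |σ| / d_σ`. -/
def tau (σ : E2 × E2) : ℝ := elen σ / M.dOf σ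

/-- The mesh size `h`: the largest diameter of a circumscribed circle. -/
def meshSize : ℝ := M.tris.sup' M.tris_nonempty fun t => 2 * t.simplex.circumradius

/-- Mesh regularity with constant `C_reg`: `d_σ ≥ C_reg |σ|` and `|σ| ≥ C_reg h`. -/
def Regular (Creg : ℝ) : Prop :=
  ∀ σ ∈ M.edges, Creg * elen σ ≤ M.dOf σ ∧ Creg * M.meshSize ≤ elen σ

/-- For `σ` an edge of `t`, the triangle on the other side of `σ`. -/
def other (t : Tri) (σ : E2 × E2) : Tri := if M.Kof σ = t then M.Lof σ else M.Kof σ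

/-- The `L²(Ω)` inner product of two piecewise constant (`P₀`) fields. -/
def l2P0 (v w : Tri → E2) : ℝ := ∑ t ∈ M.tris, t.area * ⟪v t, w t⟫

/-- The `L²(Ω)` norm of a `P₀` field. -/
def l2normP0 (v : Tri → E2) : ℝ := Real.sqrt (M.l2P0 v v)

/-- The discrete `H¹` norm `‖·‖_h` on `P₀`. -/
def normh (v : Tri → E2) : ℝ :=
  Real.sqrt (∑ σ ∈ M.intEdges, M.tau σ * ‖v (M.Lof σ) - v (M.Kof σ)‖ ^ 2
    + ∑ σ ∈ M.extEdges, M.tau σ * ‖v (M.Kof σ)‖ ^ 2)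

/-- A family of affine maps (one per triangle) is in `P₁^{nc}`: the two traces agree
at the midpoint of every interior edge. -/
def IsP1nc (q : Tri → (E2 →ᵃ[ℝ] ℝ)) : Prop :=
  ∀ σ ∈ M.intEdges, q (M.Kof σ) (emid σ) = q (M.Lof σ) (emid σ)

/-- Membership in `L²₀`: the piecewise affine function has zero mean on `Ω`. -/
def MeanZero (q : Tri → (E2 →ᵃ[ℝ] ℝ)) : Prop :=
  ∑ t ∈ M.tris, ∫ x in t.carrier, q t x = 0

/-- The `L²(Ω)` inner product of two piecewise affine functions. -/
def l2P1 (q r : Tri → (E2 →ᵃ[ℝ] ℝ)) : ℝ :=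
  ∑ t ∈ M.tris, ∫ x in t.carrier, q t x * r t x

/-- The `L²(Ω)` norm of a piecewise affine function. -/
def l2normP1 (q : Tri → (E2 →ᵃ[ℝ] ℝ)) : ℝ := Real.sqrt (M.l2P1 q q)

end Mesh

/-- The gradient (a constant vector) of an affine function on the plane. -/
def gradA (f : E2 →ᵃ[ℝ] ℝ) : E2 :=
  (InnerProductSpace.toDual ℝ E2).symm (LinearMap.toContinuousLinearMap f.linear)

/-- The discrete gradient `∇_h q` of a piecewise affine function: the piecewise
constant field equal on each triangle to the gradient of the affine piece. -/
def gradh (q : Tri → (E2 →ᵃ[ℝ] ℝ)) : Tri → E2 := fun t => gradA (q t)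

/-- The (constant) divergence of an affine vector field of the plane. -/
def divA (f : E2 →ᵃ[ℝ] E2) : ℝ := LinearMap.trace ℝ E2 f.linear

/-- The normal component `(u·n_{K,σ})_σ` of a piecewise affine field on the edge `σ`
of the triangle `t` (evaluated at the midpoint of `σ`). -/
def unrm (u : Tri → (E2 →ᵃ[ℝ] E2)) (t : Tri) (σ : E2 × E2) : ℝ :=
  ⟪u t (emid σ), t.nrm σ⟫

namespace Mesh

variable {Ω : Set E2} (M : Mesh Ω)

/-- The norm `‖q‖_{1,h} = (|q|² + |∇_h q|²)^{1/2}` on `P₁^{nc}`. -/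
def norm1h (q : Tri → (E2 →ᵃ[ℝ] ℝ)) : ℝ :=
  Real.sqrt ((M.l2normP1 q) ^ 2 + (M.l2normP0 (gradh q)) ^ 2)

/-- The prescribed value of `div_h v` at the midpoint of the edge `σ`. -/
def divhImage (v : Tri → E2) (σ : E2 × E2) : ℝ :=
  if (M.tris.filter fun t => t.hasEdge σ).card = 2 then
    (3 * elen σ / ((M.Kof σ).area + (M.Lof σ).area)) *
      ⟪v (M.Lof σ) - v (M.Kof σ), (M.Kof σ).nrm σ⟫
  else
    -((3 * elen σ / (M.Kof σ).area) * ⟪v (M.Kof σ), (M.Kof σ).nrm σ⟫)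

/-- `d = div_h v`: `d` is the element of `P₁^{nc}` taking the prescribed values at
the midpoints of the edges. -/
def IsDivh (v : Tri → E2) (d : Tri → (E2 →ᵃ[ℝ] ℝ)) : Prop :=
  M.IsP1nc d ∧
    ∀ t ∈ M.tris, ∀ σ ∈ M.edges, t.hasEdge σ → d t (emid σ) = M.divhImage v σ

/-- The discrete Laplacian `Δ̃_h` on `P₀`. -/
def laph (v : Tri → E2) : Tri → E2 := fun t =>
  (t.area)⁻¹ •
    ((∑ σ ∈ M.intEdges.filter fun σ => t.hasEdge σ, M.tau σ • (v (M.other t σ) - v t))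
      - ∑ σ ∈ M.extEdges.filter fun σ => t.hasEdge σ, M.tau σ • v t)

/-- The upwind convection operator `b̃_h(u_h, v_h) ∈ P₀`. -/
def btilde (u : Tri → (E2 →ᵃ[ℝ] E2)) (v : Tri → E2) : Tri → E2 := fun t =>
  (t.area)⁻¹ • ∑ σ ∈ M.intEdges.filter fun σ => t.hasEdge σ,
    elen σ • (max (unrm u t σ) 0 • v t + min (unrm u t σ) 0 • v (M.other t σ))

/-- The trilinear form `b_h(u_h, v_h, w_h)`. -/
def bh (u : Tri → (E2 →ᵃ[ℝ] E2)) (v w : Tri → E2) : ℝ :=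
  ∑ t ∈ M.tris, t.area * ⟪w t, M.btilde u v t⟫

/-- Membership in the lowest-order Raviart–Thomas space `RT₀`: the normal component is
constant on each edge of each triangle, matches across interior edges and vanishes on
boundary edges. -/
def IsRT0 (u : Tri → (E2 →ᵃ[ℝ] E2)) : Prop :=
  (∀ t ∈ M.tris, ∀ σ ∈ M.edges, t.hasEdge σ → ∀ x ∈ eseg σ,
      ⟪u t x, t.nrm σ⟫ = unrm u t σ)
  ∧ (∀ σ ∈ M.intEdges,
      ⟪u (M.Kof σ) (emid σ), (M.Kof σ).nrm σ⟫ =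
        ⟪u (M.Lof σ) (emid σ), (M.Kof σ).nrm σ⟫)
  ∧ (∀ σ ∈ M.extEdges, unrm u (M.Kof σ) σ = 0)

/-- Membership of a piecewise constant field in `P₀ ∩ RT₀`. -/
def IsRT0const (v : Tri → E2) : Prop :=
  (∀ σ ∈ M.intEdges, ⟪v (M.Lof σ) - v (M.Kof σ), (M.Kof σ).nrm σ⟫ = 0)
  ∧ ∀ σ ∈ M.extEdges, ⟪v (M.Kof σ), (M.Kof σ).nrm σ⟫ = 0

/-- The `L²(Ω)` norm of a piecewise affine vector field. -/
def l2normRT (u : Tri → (E2 →ᵃ[ℝ] E2)) : ℝ :=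
  Real.sqrt (∑ t ∈ M.tris, ∫ x in t.carrier, ‖u t x‖ ^ 2)

end Mesh

def det2 (x y : E2) : ℝ := x 0 * y 1 - x 1 * y 0
lemma divA_eq (f : E2 →ᵃ[ℝ] E2) :
    divA f = (f.linear (EuclideanSpace.single 0 1)) 0 + (f.linear (EuclideanSpace.single 1 1)) 1 := by
  rw [divA, LinearMap.trace_eq_matrix_trace ℝ (EuclideanSpace.basisFun (Fin 2) ℝ).toBasis,
    Matrix.trace]
  simp [Matrix.diag, LinearMap.toMatrix_apply, Fin.sum_univ_two,
    OrthonormalBasis.coe_toBasis_repr_apply, EuclideanSpace.basisFun_repr,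
    EuclideanSpace.basisFun_apply]

lemma e2_decomp (x : E2) : x = x 0 • EuclideanSpace.single 0 1 + x 1 • EuclideanSpace.single (1:Fin 2) (1:ℝ) := by
  ext i; fin_cases i <;> simp [EuclideanSpace.single_apply]

lemma linear_comp (L : E2 →ₗ[ℝ] E2) (x : E2) (c : Fin 2) :
    (L x) c = x 0 * (L (EuclideanSpace.single 0 1)) c + x 1 * (L (EuclideanSpace.single 1 1)) c := by
  conv_lhs => rw [e2_decomp x]; simp

lemma affine_val (f : E2 →ᵃ[ℝ] E2) (x : E2) : f x = f.linear x + f 0 := by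
  have := f.linearMap_vsub x 0
  simp only [vsub_eq_sub, sub_zero] at this
  rw [this]; abel

lemma mid_comp (x y : E2) (c : Fin 2) : (midpoint ℝ x y) c = (x c + y c)/2 := by
  rw [midpoint_eq_smul_add]; simp; ring

def Tterm (u : E2 →ᵃ[ℝ] E2) (A B C : E2) : ℝ :=
  (if det2 (B-A) (C-A) ≤ 0 then (1:ℝ) else -1) * det2 (B-A) (u (midpoint ℝ A B))

lemma Tswap (u : E2 →ᵃ[ℝ] E2) (A B C : E2) (hD : det2 (B-A) (C-A) ≠ 0) :
    Tterm u A B C = Tterm u B A C := by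
  have h1 : det2 (A-B) (C-B) = -det2 (B-A) (C-A) := by simp [det2]; ring
  have h2 : ∀ z, det2 (A-B) z = -det2 (B-A) z := by intro z; simp [det2]; ring
  unfold Tterm
  rw [h1, h2, midpoint_comm]
  rcases lt_or_gt_of_ne hD with h | h
  · rw [if_pos (le_of_lt h), if_neg (by linarith)]; ring
  · rw [if_neg (by linarith), if_pos (by linarith)]; ring

lemma hu_comp (u : E2 →ᵃ[ℝ] E2) (X : E2) (c : Fin 2) :
    u X c = X 0 * (u.linear (EuclideanSpace.single 0 1)) c
      + X 1 * (u.linear (EuclideanSpace.single 1 1)) c + u 0 c := by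
  conv_lhs => rw [affine_val]
  simp only [PiLp.add_apply]
  rw [linear_comp]

lemma hmid_comp (u : E2 →ᵃ[ℝ] E2) (A B : E2) (c : Fin 2) :
    u (midpoint ℝ A B) c = (u A c + u B c)/2 := by
  rw [u.map_midpoint, mid_comp]

lemma core (u : E2 →ᵃ[ℝ] E2) (P0 P1 P2 : E2)
    (hD : det2 (P1-P0) (P2-P0) ≠ 0) (htr : 0 ≤ divA u) :
    0 ≤ Tterm u P0 P1 P2 + Tterm u P1 P2 P0 + Tterm u P0 P2 P1 := by
  rw [divA_eq] at htr
  have hc2 : det2 (P2-P1) (P0-P1) = det2 (P1-P0) (P2-P0) := by simp [det2]; ring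
  have hc3 : det2 (P2-P0) (P1-P0) = -det2 (P1-P0) (P2-P0) := by simp [det2]; ring
  have key : ∀ X : E2, ∀ c, u X c = u P0 c
      + ((X 0 - P0 0) * (u.linear (EuclideanSpace.single 0 1)) c
        + (X 1 - P0 1) * (u.linear (EuclideanSpace.single 1 1)) c) := by
    intro X c
    have h := u.linearMap_vsub X P0
    have h2 := congrArg (fun z : E2 => z c) h
    simp only [vsub_eq_sub, PiLp.sub_apply] at h2
    rw [linear_comp] at h2
    simp only [PiLp.sub_apply] at h2
    linarith
  have e1 := key P1
  have e2 := key P2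
  unfold Tterm
  rw [hc2, hc3]
  simp only [det2, PiLp.sub_apply, hmid_comp, e1, e2]
  rcases lt_or_gt_of_ne hD with h | h
  · have h' : det2 (P1-P0) (P2-P0) ≤ 0 := le_of_lt h
    simp only [det2, PiLp.sub_apply] at h h'
    simp only [h', (by linarith : ¬(-((P1 0 - P0 0) * (P2 1 - P0 1) - (P1 1 - P0 1) * (P2 0 - P0 0)) ≤ 0)), ↓reduceIte]
    nlinarith [mul_nonneg (le_of_lt (neg_pos.mpr h)) htr]
  · simp only [det2, PiLp.sub_apply] at h
    simp only [(by linarith : ¬((P1 0 - P0 0) * (P2 1 - P0 1) - (P1 1 - P0 1) * (P2 0 - P0 0) ≤ 0)), (by linarith : -((P1 0 - P0 0) * (P2 1 - P0 1) - (P1 1 - P0 1) * (P2 0 - P0 0)) ≤ 0), ↓reduceIte]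
    nlinarith [mul_nonneg (le_of_lt h) htr]

lemma perp_inner (x y : E2) : ⟪perp x, y⟫ = det2 x y := by
  simp [PiLp.inner_apply, Fin.sum_univ_two, perp, det2]; ring

lemma fin3_cover (i j k m : Fin 3) (hij : i ≠ j) (hik : i ≠ k) (hjk : j ≠ k) :
    m = i ∨ m = j ∨ m = k := by revert hij hik hjk; revert i j k m; decide

lemma Tri.vtx_injective (t : Tri) : Function.Injective t.vtx := t.indep.injective

lemma Tri.det_ne (t : Tri) (i j k : Fin 3) (hij : i ≠ j) (hik : i ≠ k) (hjk : j ≠ k) :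
    det2 (t.vtx j - t.vtx i) (t.vtx k - t.vtx i) ≠ 0 := by
  intro hdet
  set a := t.vtx j - t.vtx i with ha
  set b := t.vtx k - t.vtx i with hb
  have hane : a ≠ 0 := sub_ne_zero.mpr fun h => hij (t.vtx_injective h).symm
  have hcomp : ¬ (a 0 = 0 ∧ a 1 = 0) := by
    intro ⟨h0, h1⟩
    apply hane
    ext m; fin_cases m <;> simpa [h0, h1]
  have hex : ∃ c : ℝ, b = c • a := by
    simp only [det2] at hdet
    by_cases h0 : a 0 = 0
    · have h1 : a 1 ≠ 0 := fun h => hcomp ⟨h0, h⟩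
      have hb0 : b 0 = 0 := by
        have hz : a 1 * b 0 = 0 := by rw [h0] at hdet; linarith
        exact (mul_eq_zero.mp hz).resolve_left h1
      refine ⟨b 1 / a 1, ?_⟩
      ext m; fin_cases m
      · simp [h0, hb0]
      · simp only [PiLp.smul_apply, smul_eq_mul, Fin.zero_eta, Fin.mk_one]; field_simp
    · refine ⟨b 0 / a 0, ?_⟩
      ext m; fin_cases m
      · simp only [PiLp.smul_apply, smul_eq_mul, Fin.zero_eta, Fin.mk_one]; field_simp
      · simp only [PiLp.smul_apply, smul_eq_mul, Fin.zero_eta, Fin.mk_one]; field_simp; nlinarith [hdet]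
  obtain ⟨c, hc⟩ := hex
  apply affineIndependent_iff_not_collinear.mp t.indep
  rw [collinear_iff_of_mem (Set.mem_range_self i)]
  refine ⟨a, ?_⟩
  rintro p ⟨m, rfl⟩
  rcases fin3_cover i j k m hij hik hjk with rfl | rfl | rfl
  · exact ⟨0, by simp⟩
  · exact ⟨1, by rw [one_smul, ha]; simp [vadd_eq_add]⟩
  · exact ⟨c, by rw [← hc, hb]; simp [vadd_eq_add]⟩

lemma Tri.centroid_eq (t : Tri) (i j k : Fin 3) (hij : i ≠ j) (hik : i ≠ k) (hjk : j ≠ k) :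
    t.centroid = (3:ℝ)⁻¹ • (t.vtx i + t.vtx j + t.vtx k) := by
  have huniv : ({i, j, k} : Finset (Fin 3)) = Finset.univ := by
    apply Finset.eq_univ_of_card
    rw [Finset.card_insert_of_notMem (by simp [hij, hik]),
      Finset.card_insert_of_notMem (by simp [hjk]), Finset.card_singleton]
    rfl
  rw [Tri.centroid, Finset.centroid_def,
    Finset.affineCombination_eq_linear_combination _ _ _ (by simp [Finset.sum_centroidWeights_eq_one_of_nonempty ℝ Finset.univ ⟨i, Finset.mem_univ i⟩])]
  rw [← huniv, Finset.sum_insert (by simp [hij, hik]), Finset.sum_insert (by simp [hjk]),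
    Finset.sum_singleton]
  simp only [Finset.centroidWeights_apply, huniv, Finset.card_univ, Fintype.card_fin]
  push_cast
  module

lemma sign_eq (A B C g : E2) (hg : g = (3:ℝ)⁻¹ • (A + B + C)) :
    ⟪perp (B - A), midpoint ℝ A B - g⟫ = -(det2 (B - A) (C - A)) / 3 := by
  subst hg
  rw [perp_inner]
  simp only [det2, PiLp.sub_apply, PiLp.smul_apply, PiLp.add_apply, smul_eq_mul, mid_comp]
  ring

lemma elen_ne (σ : E2 × E2) (h : σ.1 ≠ σ.2) : elen σ ≠ 0 := dist_ne_zero.mpr h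

lemma edge_term (t : Tri) (σ : E2 × E2) (u : E2 →ᵃ[ℝ] E2) (i j k : Fin 3)
    (hij : i ≠ j) (hik : i ≠ k) (hjk : j ≠ k)
    (h1 : t.vtx i = σ.1) (h2 : t.vtx j = σ.2) :
    elen σ * ⟪u (emid σ), t.nrm σ⟫ = Tterm u σ.1 σ.2 (t.vtx k) := by
  have hne : σ.1 ≠ σ.2 := by
    rw [← h1, ← h2]; exact fun h => hij (t.vtx_injective h)
  have hD : det2 (σ.2 - σ.1) (t.vtx k - σ.1) ≠ 0 := by
    rw [← h1, ← h2]; exact t.det_ne i j k hij hik hjk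
  have hsig : ⟪perp (σ.2 - σ.1), emid σ - t.centroid⟫
      = -(det2 (σ.2 - σ.1) (t.vtx k - σ.1)) / 3 := by
    rw [emid, ← h1, ← h2]
    exact sign_eq _ _ _ _ (t.centroid_eq i j k hij hik hjk)
  have hlen : elen σ * (elen σ)⁻¹ = 1 := mul_inv_cancel₀ (elen_ne σ hne)
  rw [Tri.nrm, Tterm, hsig]
  rcases lt_or_gt_of_ne hD with h | h
  · rw [if_pos (by linarith), if_pos (le_of_lt h)]
    rw [real_inner_smul_right, real_inner_comm, perp_inner]
    rw [← mul_assoc, hlen, emid]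
  · rw [if_neg (by push_neg; linarith), if_neg (by linarith)]
    rw [inner_neg_right, real_inner_smul_right, real_inner_comm, perp_inner]
    rw [mul_neg, ← mul_assoc, hlen]; rw [emid]; ring

def Tri.basis (t : Tri) : AffineBasis (Fin 3) ℝ E2 :=
  ⟨t.vtx, t.indep, t.indep.affineSpan_eq_top_iff_card_eq_finrank_add_one.mpr
    (by simp [finrank_euclideanSpace_fin])⟩

lemma Tri.basis_apply (t : Tri) (m : Fin 3) : t.basis m = t.vtx m := rfl

lemma Tri.interior_carrier (t : Tri) :
    interior t.carrier = {x | ∀ m, 0 < t.basis.coord m x} := by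
  rw [Tri.carrier, show Set.range t.vtx = Set.range ⇑t.basis from rfl,
    t.basis.interior_convexHull]

lemma coord_pert (b : AffineBasis (Fin 3) ℝ E2) (m : Fin 3) (A B w : E2) (δ : ℝ) :
    b.coord m (midpoint ℝ A B + δ • w)
      = (b.coord m A + b.coord m B) / 2 + δ * (b.coord m (A + w) - b.coord m A) := by
  have h1 : midpoint ℝ A B + δ • w = (δ • w) +ᵥ midpoint ℝ A B := by
    rw [vadd_eq_add]; abel
  rw [h1, AffineMap.map_vadd, vadd_eq_add]
  have h2 : (b.coord m).linear w = b.coord m (A + w) - b.coord m A := by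
    have := (b.coord m).linearMap_vsub (A + w) A
    simp only [vsub_eq_sub, add_sub_cancel_left] at this
    rw [this]
  rw [LinearMap.map_smul, smul_eq_mul, h2, (b.coord m).map_midpoint, midpoint_eq_smul_add, add_comm]
  norm_num
  ring

set_option maxHeartbeats 1600000 in
lemma opposite_sides (K L : Tri) (σ : E2 × E2) (hKL : K ≠ L)
    (hdisj : interior K.carrier ∩ interior L.carrier = ∅)
    (iK jK kK : Fin 3) (hijK : iK ≠ jK) (hikK : iK ≠ kK) (hjkK : jK ≠ kK)
    (h1K : K.vtx iK = σ.1) (h2K : K.vtx jK = σ.2)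
    (iL jL kL : Fin 3) (hijL : iL ≠ jL) (hikL : iL ≠ kL) (hjkL : jL ≠ kL)
    (h1L : L.vtx iL = σ.1) (h2L : L.vtx jL = σ.2) :
    det2 (σ.2 - σ.1) (K.vtx kK - σ.1) * det2 (σ.2 - σ.1) (L.vtx kL - σ.1) < 0 := by
  set A := σ.1
  set B := σ.2
  set CK := K.vtx kK with hCK
  set CL := L.vtx kL with hCL
  have hDK : det2 (B - A) (CK - A) ≠ 0 := by
    rw [← h1K, ← h2K]; exact K.det_ne iK jK kK hijK hikK hjkK
  have hDL : det2 (B - A) (CL - A) ≠ 0 := by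
    rw [← h1L, ← h2L]; exact L.det_ne iL jL kL hijL hikL hjkL
  by_contra hcon
  push_neg at hcon
  have hprod : 0 < det2 (B - A) (CK - A) * det2 (B - A) (CL - A) :=
    lt_of_le_of_ne hcon (by
      intro h
      rcases mul_eq_zero.mp h.symm with h' | h' <;> [exact hDK h'; exact hDL h'])
  -- coordinates of CK w.r.t. L
  set r : Fin 3 → ℝ := fun m => L.basis.coord m CK with hr
  have hrn : ∀ n, L.basis.coord n CK = r n := fun n => rfl
  have hsum : r iL + r jL + r kL = 1 := by
    have h := L.basis.sum_coord_apply_eq_one CK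
    have huniv : ({iL, jL, kL} : Finset (Fin 3)) = Finset.univ := by
      apply Finset.eq_univ_of_card
      rw [Finset.card_insert_of_notMem (by simp [hijL, hikL]),
        Finset.card_insert_of_notMem (by simp [hjkL]), Finset.card_singleton]; rfl
    rw [← huniv, Finset.sum_insert (by simp [hijL, hikL]),
      Finset.sum_insert (by simp [hjkL]), Finset.sum_singleton] at h
    simp only [hr]
    linarith [h]
  have hcomb : CK = r iL • A + r jL • B + r kL • CL := by
    have h := L.basis.affineCombination_coord_eq_self CK
    have huniv : ({iL, jL, kL} : Finset (Fin 3)) = Finset.univ := by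
      apply Finset.eq_univ_of_card
      rw [Finset.card_insert_of_notMem (by simp [hijL, hikL]),
        Finset.card_insert_of_notMem (by simp [hjkL]), Finset.card_singleton]; rfl
    rw [Finset.affineCombination_eq_linear_combination _ _ _
      (by rw [L.basis.sum_coord_apply_eq_one]), ← huniv,
      Finset.sum_insert (by simp [hijL, hikL]), Finset.sum_insert (by simp [hjkL]),
      Finset.sum_singleton] at h
    refine h.symm.trans ?_
    simp only [Tri.basis_apply, h1L, h2L, hr, hCL]
    abel
  have hCKc : ∀ c : Fin 2, CK c = r iL * A c + r jL * B c + r kL * CL c := by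
    intro c
    conv_lhs => rw [hcomb]
    simp
  have hrk : det2 (B - A) (CK - A) = r kL * det2 (B - A) (CL - A) := by
    simp only [det2, PiLp.sub_apply, hCKc]
    linear_combination ((B 0 - A 0) * A 1 - (B 1 - A 1) * A 0) * hsum
  have hrkpos : 0 < r kL := by
    rw [hrk] at hprod
    nlinarith [mul_self_nonneg (det2 (B - A) (CL - A))]
  clear_value r
  -- the perturbed midpoint
  set δ : ℝ := min (1/4) (1 / (4 * (1 + |r iL| + |r jL|))) with hδ
  have hM : (0:ℝ) < 1 + |r iL| + |r jL| := by positivity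
  have hδ0 : 0 < δ := lt_min (by norm_num) (by positivity)
  have hδ4 : δ ≤ 1/4 := min_le_left _ _
  have hδb : δ * (1 + |r iL| + |r jL|) ≤ 1/4 := by
    calc δ * (1 + |r iL| + |r jL|) ≤ (1 / (4 * (1 + |r iL| + |r jL|))) * (1 + |r iL| + |r jL|) :=
          mul_le_mul_of_nonneg_right (min_le_right _ _) (le_of_lt hM)
      _ = 1/4 := by field_simp
  clear_value δ
  set p : E2 := midpoint ℝ A B + δ • (CK - A) with hp
  have hAw : A + (CK - A) = CK := by abel
  -- p is in the interior of K
  have hpK : p ∈ interior K.carrier := by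
    rw [K.interior_carrier]
    have hcA : ∀ n, K.basis.coord n A = if n = iK then 1 else 0 := fun n => by
      rw [← h1K, ← K.basis_apply, K.basis.coord_apply]
    have hcB : ∀ n, K.basis.coord n B = if n = jK then 1 else 0 := fun n => by
      rw [← h2K, ← K.basis_apply, K.basis.coord_apply]
    have hcC : ∀ n, K.basis.coord n CK = if n = kK then 1 else 0 := fun n => by
      rw [hCK, ← K.basis_apply, K.basis.coord_apply]
    intro m
    rw [hp, coord_pert, hAw, hcA, hcB, hcC]
    rcases fin3_cover iK jK kK m hijK hikK hjkK with rfl | rfl | rfl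
    · simp [hijK, hikK]; linarith
    · simp [hijK.symm, hjkK]
    · simp [hikK.symm, hjkK.symm]; linarith
  -- p is in the interior of L
  have hpL : p ∈ interior L.carrier := by
    rw [L.interior_carrier]
    intro m
    rw [hp, coord_pert, hAw]
    have hcA : ∀ n, L.basis.coord n A = if n = iL then 1 else 0 := by
      intro n
      rw [← h1L, ← L.basis_apply, L.basis.coord_apply]
    have hcB : ∀ n, L.basis.coord n B = if n = jL then 1 else 0 := by
      intro n
      rw [← h2L, ← L.basis_apply, L.basis.coord_apply]
    rcases fin3_cover iL jL kL m hijL hikL hjkL with rfl | rfl | rfl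
    · rw [hcA, hcB, hrn]
      simp [hijL]
      have h1 : δ * (r m - 1) ≥ -(1/4) := by
        nlinarith [neg_abs_le (r m), abs_nonneg (r jL), abs_nonneg (r m)]
      linarith
    · rw [hcA, hcB, hrn]
      simp [hijL.symm]
      have h1 : δ * r m ≥ -(1/4) := by
        nlinarith [neg_abs_le (r m), abs_nonneg (r m), abs_nonneg (r iL)]
      linarith
    · rw [hcA, hcB, hrn]
      simp [hikL.symm, hjkL.symm]
      positivity
  have : p ∈ interior K.carrier ∩ interior L.carrier := ⟨hpK, hpL⟩
  rw [hdisj] at this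
  exact this

section MeshLemmas

lemma Tri.area_pos (t : Tri) : 0 < t.area := by
  have hne : (interior t.carrier).Nonempty := by
    refine ⟨Finset.centroid ℝ Finset.univ ⇑t.basis, ?_⟩
    have := t.basis.centroid_mem_interior_convexHull
    rw [Tri.carrier, show Set.range t.vtx = Set.range ⇑t.basis from rfl]
    exact this
  have h1 : 0 < volume t.carrier := MeasureTheory.Measure.measure_pos_of_nonempty_interior volume hne
  have h2 : volume t.carrier < ⊤ :=
    ((Set.finite_range t.vtx).isCompact_convexHull (𝕜 := ℝ)).measure_lt_top
  exact ENNReal.toReal_pos h1.ne' h2.ne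

lemma Tri.edge_indices (t : Tri) (σ : E2 × E2) (h : t.hasEdge σ) :
    ∃ i j k : Fin 3, i ≠ j ∧ i ≠ k ∧ j ≠ k ∧ t.vtx i = σ.1 ∧ t.vtx j = σ.2 := by
  obtain ⟨hne, ⟨i, hi⟩, ⟨j, hj⟩⟩ := h
  have hij : i ≠ j := by rintro rfl; exact hne (hi ▸ hj ▸ rfl)
  have hk : ∀ a b : Fin 3, a ≠ b → ∃ k, a ≠ k ∧ b ≠ k := by decide
  obtain ⟨k, hik, hjk⟩ := hk i j hij
  exact ⟨i, j, k, hij, hik, hjk, hi, hj⟩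

lemma Tri.sign_emid (t : Tri) (σ : E2 × E2) (i j k : Fin 3)
    (hij : i ≠ j) (hik : i ≠ k) (hjk : j ≠ k)
    (h1 : t.vtx i = σ.1) (h2 : t.vtx j = σ.2) :
    ⟪perp (σ.2 - σ.1), emid σ - t.centroid⟫ = -(det2 (σ.2 - σ.1) (t.vtx k - σ.1)) / 3 := by
  rw [emid, ← h1, ← h2]
  exact sign_eq _ _ _ _ (t.centroid_eq i j k hij hik hjk)

namespace Mesh

variable {Ω : Set E2} (M : Mesh Ω)

lemma edge_cases (σ : E2 × E2) (hσ : σ ∈ M.edges) : σ ∈ M.intEdges ∨ σ ∈ M.extEdges := by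
  have h1 : 0 < (M.tris.filter fun t => t.hasEdge σ).card := by
    obtain ⟨t, ht, he⟩ := M.edges_sub σ hσ
    exact Finset.card_pos.mpr ⟨t, Finset.mem_filter.mpr ⟨ht, he⟩⟩
  have h2 := M.edges_atMostTwo σ hσ
  have : (M.tris.filter fun t => t.hasEdge σ).card = 1
      ∨ (M.tris.filter fun t => t.hasEdge σ).card = 2 := by omega
  rcases this with h | h
  · exact Or.inr (Finset.mem_filter.mpr ⟨hσ, h⟩)
  · exact Or.inl (Finset.mem_filter.mpr ⟨hσ, h⟩)

lemma int_spec (σ : E2 × E2) (hσ : σ ∈ M.intEdges) :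
    M.Kof σ ∈ M.tris ∧ (M.Kof σ).hasEdge σ ∧ M.Lof σ ∈ M.tris ∧ (M.Lof σ).hasEdge σ
      ∧ M.Lof σ ≠ M.Kof σ := by
  have hσe : σ ∈ M.edges := (Finset.mem_filter.mp hσ).1
  have hc : (M.tris.filter fun t => t.hasEdge σ).card = 2 := (Finset.mem_filter.mp hσ).2
  obtain ⟨hK1, hK2⟩ := M.Kof_mem σ hσe
  obtain ⟨hL1, hL2, hL3⟩ := M.Lof_mem σ hσe hc
  exact ⟨hK1, hK2, hL1, hL2, hL3⟩

lemma filter_eq_of_int (σ : E2 × E2) (hσ : σ ∈ M.intEdges) :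
    M.tris.filter (fun t => t.hasEdge σ) = {M.Lof σ, M.Kof σ} := by
  have hc : (M.tris.filter fun t => t.hasEdge σ).card = 2 := (Finset.mem_filter.mp hσ).2
  obtain ⟨hK1, hK2, hL1, hL2, hL3⟩ := M.int_spec σ hσ
  refine (Finset.eq_of_subset_of_card_le ?_ ?_).symm
  · intro x hx
    rcases Finset.mem_insert.mp hx with rfl | hx
    · exact Finset.mem_filter.mpr ⟨hL1, hL2⟩
    · rw [Finset.mem_singleton.mp hx]; exact Finset.mem_filter.mpr ⟨hK1, hK2⟩
  · rw [hc, Finset.card_insert_of_notMem (by simp [hL3]), Finset.card_singleton]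

lemma tri_of_int (σ : E2 × E2) (hσ : σ ∈ M.intEdges) (t : Tri) (ht : t ∈ M.tris)
    (he : t.hasEdge σ) : t = M.Kof σ ∨ t = M.Lof σ := by
  have := M.filter_eq_of_int σ hσ ▸ Finset.mem_filter.mpr ⟨ht, he⟩
  rcases Finset.mem_insert.mp this with h | h
  · exact Or.inr h
  · exact Or.inl (Finset.mem_singleton.mp h)

lemma ext_spec (σ : E2 × E2) (hσ : σ ∈ M.extEdges) (t : Tri) (ht : t ∈ M.tris)
    (he : t.hasEdge σ) : t = M.Kof σ := by
  have hσe : σ ∈ M.edges := (Finset.mem_filter.mp hσ).1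
  have hc : (M.tris.filter fun t => t.hasEdge σ).card = 1 := (Finset.mem_filter.mp hσ).2
  obtain ⟨a, ha⟩ := Finset.card_eq_one.mp hc
  obtain ⟨hK1, hK2⟩ := M.Kof_mem σ hσe
  have h1 : t = a := Finset.mem_singleton.mp (ha ▸ Finset.mem_filter.mpr ⟨ht, he⟩)
  have h2 : M.Kof σ = a := Finset.mem_singleton.mp (ha ▸ Finset.mem_filter.mpr ⟨hK1, hK2⟩)
  rw [h1, h2]

lemma other_K (σ : E2 × E2) : M.other (M.Kof σ) σ = M.Lof σ := by
  rw [Mesh.other, if_pos rfl]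

lemma other_L (σ : E2 × E2) (hσ : σ ∈ M.intEdges) : M.other (M.Lof σ) σ = M.Kof σ := by
  have h := (M.int_spec σ hσ).2.2.2.2
  rw [Mesh.other, if_neg (fun hc => h hc.symm)]

lemma nrm_opp (σ : E2 × E2) (hσ : σ ∈ M.intEdges) :
    (M.Lof σ).nrm σ = -((M.Kof σ).nrm σ) := by
  obtain ⟨hK1, hK2, hL1, hL2, hL3⟩ := M.int_spec σ hσ
  obtain ⟨iK, jK, kK, hijK, hikK, hjkK, h1K, h2K⟩ := (M.Kof σ).edge_indices σ hK2
  obtain ⟨iL, jL, kL, hijL, hikL, hjkL, h1L, h2L⟩ := (M.Lof σ).edge_indices σ hL2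
  have hdisj := M.interior_disjoint _ hK1 _ hL1 (fun h => hL3 h.symm)
  have hopp := opposite_sides (M.Kof σ) (M.Lof σ) σ (fun h => hL3 h.symm) hdisj
    iK jK kK hijK hikK hjkK h1K h2K iL jL kL hijL hikL hjkL h1L h2L
  have hsK := (M.Kof σ).sign_emid σ iK jK kK hijK hikK hjkK h1K h2K
  have hsL := (M.Lof σ).sign_emid σ iL jL kL hijL hikL hjkL h1L h2L
  rw [Tri.nrm, Tri.nrm, hsK, hsL]
  rcases lt_or_gt_of_ne (fun h : det2 (σ.2 - σ.1) ((M.Kof σ).vtx kK - σ.1) = 0 => by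
      rw [h, zero_mul] at hopp; exact lt_irrefl 0 hopp) with hK | hK
  · have hL : 0 < det2 (σ.2 - σ.1) ((M.Lof σ).vtx kL - σ.1) := by nlinarith
    rw [if_neg (by push_neg; linarith), if_pos (by linarith)]
  · have hL : det2 (σ.2 - σ.1) ((M.Lof σ).vtx kL - σ.1) < 0 := by nlinarith
    rw [if_pos (by linarith), if_neg (by push_neg; linarith), neg_neg]

lemma unrm_opp (u : Tri → (E2 →ᵃ[ℝ] E2)) (hu : M.IsRT0 u) (σ : E2 × E2)
    (hσ : σ ∈ M.intEdges) : unrm u (M.Lof σ) σ = -unrm u (M.Kof σ) σ := by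
  rw [unrm, unrm, M.nrm_opp σ hσ, inner_neg_right, ← (hu.2.1 σ hσ)]

end Mesh

lemma mesh_term (t : Tri) (σ : E2 × E2) (u : E2 →ᵃ[ℝ] E2) (i j k : Fin 3)
    (hij : i ≠ j) (hik : i ≠ k) (hjk : j ≠ k)
    (hor : σ = (t.vtx i, t.vtx j) ∨ σ = (t.vtx j, t.vtx i)) :
    elen σ * ⟪u (emid σ), t.nrm σ⟫ = Tterm u (t.vtx i) (t.vtx j) (t.vtx k) := by
  rcases hor with rfl | rfl
  · exact edge_term t _ u i j k hij hik hjk rfl rfl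
  · rw [edge_term t _ u j i k hij.symm hjk hik rfl rfl]
    exact Tswap u _ _ _ (t.det_ne j i k hij.symm hjk hik)

namespace Mesh

variable {Ω : Set E2} (M : Mesh Ω)

set_option maxHeartbeats 1600000 in
lemma flux_nonneg (u : Tri → (E2 →ᵃ[ℝ] E2)) (hu : M.IsRT0 u) (t : Tri) (ht : t ∈ M.tris)
    (hd : 0 ≤ divA (u t)) :
    0 ≤ ∑ σ ∈ M.intEdges.filter (fun σ => t.hasEdge σ), elen σ * unrm u t σ := by
  classical
  set S := M.edges.filter (fun σ => t.hasEdge σ) with hS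
  have hv := t.vtx_injective
  have mk : ∀ i j : Fin 3, i ≠ j →
      ∃ σij ∈ M.edges, σij = (t.vtx i, t.vtx j) ∨ σij = (t.vtx j, t.vtx i) := by
    intro i j hij
    rcases M.edges_cover t ht i j hij with h | h
    exacts [⟨_, h, Or.inl rfl⟩, ⟨_, h, Or.inr rfl⟩]
  obtain ⟨s01, hs01e, hs01⟩ := mk 0 1 (by decide)
  obtain ⟨s02, hs02e, hs02⟩ := mk 0 2 (by decide)
  obtain ⟨s12, hs12e, hs12⟩ := mk 1 2 (by decide)
  -- a registered edge with given endpoints is unique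
  have hpick : ∀ σ ∈ M.edges, ∀ τ ∈ M.edges, ∀ i' j' : Fin 3, σ = (t.vtx i', t.vtx j') →
      (τ = (t.vtx i', t.vtx j') ∨ τ = (t.vtx j', t.vtx i')) → σ = τ := by
    intro σ hσ τ hτ i' j' hσeq hor
    rcases hor with h | h
    · rw [hσeq, h]
    · exfalso
      apply M.edges_orient τ hτ
      have : Prod.swap τ = σ := by rw [h, hσeq]; rfl
      rw [this]; exact hσ
  -- membership of the three canonical edges
  have hhe : ∀ (i j : Fin 3) (σ : E2 × E2), i ≠ j →
      (σ = (t.vtx i, t.vtx j) ∨ σ = (t.vtx j, t.vtx i)) → t.hasEdge σ := by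
    intro i j σ hij hor
    have hne : t.vtx i ≠ t.vtx j := fun h => hij (hv h)
    rcases hor with rfl | rfl
    · exact ⟨hne, ⟨i, rfl⟩, ⟨j, rfl⟩⟩
    · exact ⟨hne.symm, ⟨j, rfl⟩, ⟨i, rfl⟩⟩
  have hSeq : S = {s01, s02, s12} := by
    ext σ
    simp only [hS, Finset.mem_filter, Finset.mem_insert, Finset.mem_singleton]
    constructor
    · rintro ⟨hσe, hσne, ⟨i, hi⟩, ⟨j, hj⟩⟩
      have hij : i ≠ j := by rintro rfl; exact hσne (hi ▸ hj ▸ rfl)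
      have hσeq : σ = (t.vtx i, t.vtx j) := by rw [hi, hj]
      have hcases : ∀ a b : Fin 3, a ≠ b →
          (a = 0 ∧ b = 1) ∨ (a = 1 ∧ b = 0) ∨ (a = 0 ∧ b = 2) ∨ (a = 2 ∧ b = 0)
            ∨ (a = 1 ∧ b = 2) ∨ (a = 2 ∧ b = 1) := by decide
      rcases hcases i j hij with ⟨rfl, rfl⟩ | ⟨rfl, rfl⟩ | ⟨rfl, rfl⟩ | ⟨rfl, rfl⟩
        | ⟨rfl, rfl⟩ | ⟨rfl, rfl⟩
      · exact Or.inl (hpick σ hσe s01 hs01e 0 1 hσeq hs01)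
      · exact Or.inl (hpick σ hσe s01 hs01e 1 0 hσeq hs01.symm)
      · exact Or.inr (Or.inl (hpick σ hσe s02 hs02e 0 2 hσeq hs02))
      · exact Or.inr (Or.inl (hpick σ hσe s02 hs02e 2 0 hσeq hs02.symm))
      · exact Or.inr (Or.inr (hpick σ hσe s12 hs12e 1 2 hσeq hs12))
      · exact Or.inr (Or.inr (hpick σ hσe s12 hs12e 2 1 hσeq hs12.symm))
    · rintro (rfl | rfl | rfl)
      · exact ⟨hs01e, hhe 0 1 σ (by decide) hs01⟩
      · exact ⟨hs02e, hhe 0 2 σ (by decide) hs02⟩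
      · exact ⟨hs12e, hhe 1 2 σ (by decide) hs12⟩
  -- distinctness
  have hd0102 : s01 ≠ s02 := by
    rcases hs01 with h1 | h1 <;> rcases hs02 with h2 | h2 <;> rw [h1, h2] <;> intro hEq <;>
      obtain ⟨ha, hb⟩ := Prod.ext_iff.mp hEq <;>
      first
        | exact absurd (hv ha) (by decide)
        | exact absurd (hv hb) (by decide)
  have hd0112 : s01 ≠ s12 := by
    rcases hs01 with h1 | h1 <;> rcases hs12 with h2 | h2 <;> rw [h1, h2] <;> intro hEq <;>
      obtain ⟨ha, hb⟩ := Prod.ext_iff.mp hEq <;>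
      first
        | exact absurd (hv ha) (by decide)
        | exact absurd (hv hb) (by decide)
  have hd0212 : s02 ≠ s12 := by
    rcases hs02 with h1 | h1 <;> rcases hs12 with h2 | h2 <;> rw [h1, h2] <;> intro hEq <;>
      obtain ⟨ha, hb⟩ := Prod.ext_iff.mp hEq <;>
      first
        | exact absurd (hv ha) (by decide)
        | exact absurd (hv hb) (by decide)
  -- reduce the sum over interior edges of `t` to the sum over all edges of `t`
  have hfeq : M.intEdges.filter (fun σ => t.hasEdge σ)
      = S.filter (fun σ => (M.tris.filter fun t' => t'.hasEdge σ).card = 2) := by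
    ext σ
    simp only [Mesh.intEdges, hS, Finset.mem_filter]
    tauto
  rw [hfeq, Finset.sum_filter]
  have hzero : ∀ σ ∈ S, ¬((M.tris.filter fun t' => t'.hasEdge σ).card = 2) →
      elen σ * unrm u t σ = 0 := by
    intro σ hσS hnot
    obtain ⟨hσe, hσt⟩ := Finset.mem_filter.mp hσS
    rcases M.edge_cases σ hσe with hint | hext
    · exact absurd (Finset.mem_filter.mp hint).2 hnot
    · have htK : t = M.Kof σ := M.ext_spec σ hext t ht hσt
      rw [htK, hu.2.2 σ hext, mul_zero]
  have hsum_eq : ∑ σ ∈ S, (if (M.tris.filter fun t' => t'.hasEdge σ).card = 2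
      then elen σ * unrm u t σ else 0) = ∑ σ ∈ S, elen σ * unrm u t σ := by
    apply Finset.sum_congr rfl
    intro σ hσS
    by_cases h : (M.tris.filter fun t' => t'.hasEdge σ).card = 2
    · rw [if_pos h]
    · rw [if_neg h, hzero σ hσS h]
  rw [hsum_eq, hSeq, Finset.sum_insert (by simp [hd0102, hd0112]),
    Finset.sum_insert (by simp [hd0212]), Finset.sum_singleton]
  have e01 : elen s01 * unrm u t s01 = Tterm (u t) (t.vtx 0) (t.vtx 1) (t.vtx 2) :=
    mesh_term t s01 (u t) 0 1 2 (by decide) (by decide) (by decide) hs01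
  have e02 : elen s02 * unrm u t s02 = Tterm (u t) (t.vtx 0) (t.vtx 2) (t.vtx 1) :=
    mesh_term t s02 (u t) 0 2 1 (by decide) (by decide) (by decide) hs02
  have e12 : elen s12 * unrm u t s12 = Tterm (u t) (t.vtx 1) (t.vtx 2) (t.vtx 0) :=
    mesh_term t s12 (u t) 1 2 0 (by decide) (by decide) (by decide) hs12
  rw [e01, e02, e12]
  have := core (u t) (t.vtx 0) (t.vtx 1) (t.vtx 2)
    (t.det_ne 0 1 2 (by decide) (by decide) (by decide)) hd
  linarith

end Mesh

end MeshLemmas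

lemma real_min_max_aux (x : ℝ) : max x 0 = x - min x 0 := by
  rcases le_total x 0 with h | h
  · rw [max_eq_right h, min_eq_left h]; ring
  · rw [max_eq_left h, min_eq_right h]; ring

lemma real_max_neg_aux (x : ℝ) : max (-x) 0 = -min x 0 := by
  rcases le_total x 0 with h | h
  · rw [max_eq_left (by linarith), min_eq_left h]
  · rw [max_eq_right (by linarith), min_eq_right h]; ring

lemma real_min_neg_aux (x : ℝ) : min (-x) 0 = -max x 0 := by
  rcases le_total x 0 with h | h
  · rw [min_eq_right (by linarith), max_eq_right h]; ring
  · rw [min_eq_left (by linarith), max_eq_left h]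

lemma elen_nonneg (σ : E2 × E2) : 0 ≤ elen σ := dist_nonneg

/-- **Positivity of the upwind convection operator**: if `u_h ∈ RT₀` has nonnegative
(constant) divergence on each triangle, then `b_h(u_h, v_h, v_h) ≥ 0` for all `v_h ∈ P₀`. -/
theorem upwind_convection_nonneg
    {Ω : Set E2} (hΩo : IsOpen Ω) (hΩc : IsConnected Ω) (hΩb : Bornology.IsBounded Ω)
    (M : Mesh Ω) (u : Tri → (E2 →ᵃ[ℝ] E2)) (hu : M.IsRT0 u)
    (hdiv : ∀ t ∈ M.tris, 0 ≤ divA (u t)) (v : Tri → E2) :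
    0 ≤ M.bh u v v := by
  classical
  rw [Mesh.bh]
  have hterm : ∀ t ∈ M.tris, t.area * ⟪v t, M.btilde u v t⟫
      = ∑ σ ∈ M.intEdges.filter (fun σ => t.hasEdge σ),
          elen σ * (max (unrm u t σ) 0 * ⟪v t, v t⟫
            + min (unrm u t σ) 0 * ⟪v t, v (M.other t σ)⟫) := by
    intro t ht
    rw [Mesh.btilde, real_inner_smul_right, ← mul_assoc,
      mul_inv_cancel₀ t.area_pos.ne', one_mul, inner_sum]
    apply Finset.sum_congr rfl
    intro σ _
    rw [real_inner_smul_right, inner_add_right, real_inner_smul_right, real_inner_smul_right]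
  rw [Finset.sum_congr rfl hterm]
  -- the lower bound, split into a "flux" part and a "cross" part
  set g : Tri → (E2 × E2) → ℝ := fun t σ =>
    elen σ * (max (unrm u t σ) 0 * ‖v t‖^2 + min (unrm u t σ) 0 * ‖v (M.other t σ)‖^2) / 2
    with hg
  set lb : Tri → (E2 × E2) → ℝ := fun t σ =>
    (‖v t‖^2 / 2) * (elen σ * unrm u t σ) + g t σ with hlb
  have hB : ∑ t ∈ M.tris, ∑ σ ∈ M.intEdges.filter (fun σ => t.hasEdge σ), lb t σ
      ≤ ∑ t ∈ M.tris, ∑ σ ∈ M.intEdges.filter (fun σ => t.hasEdge σ),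
          elen σ * (max (unrm u t σ) 0 * ⟪v t, v t⟫
            + min (unrm u t σ) 0 * ⟪v t, v (M.other t σ)⟫) := by
    apply Finset.sum_le_sum
    intro t _
    apply Finset.sum_le_sum
    intro σ _
    rw [real_inner_self_eq_norm_sq]
    have h1 : ⟪v t, v (M.other t σ)⟫ ≤ (‖v t‖^2 + ‖v (M.other t σ)‖^2)/2 := by
      nlinarith [real_inner_le_norm (v t) (v (M.other t σ)),
        sq_nonneg (‖v t‖ - ‖v (M.other t σ)‖)]
    have h3 : min (unrm u t σ) 0 * ((‖v t‖^2 + ‖v (M.other t σ)‖^2)/2)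
        ≤ min (unrm u t σ) 0 * ⟪v t, v (M.other t σ)⟫ := by
      exact mul_le_mul_of_nonpos_left h1 (min_le_right _ _)
    have h4 : 0 ≤ elen σ := elen_nonneg σ
    rw [hlb]
    simp only [hg]
    rw [real_min_max_aux (unrm u t σ)]
    nlinarith [h3, h4, mul_le_mul_of_nonneg_left h3 h4]
  refine le_trans ?_ hB
  rw [show (∑ t ∈ M.tris, ∑ σ ∈ M.intEdges.filter (fun σ => t.hasEdge σ), lb t σ)
      = (∑ t ∈ M.tris, ∑ σ ∈ M.intEdges.filter (fun σ => t.hasEdge σ),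
          (‖v t‖^2 / 2) * (elen σ * unrm u t σ))
        + ∑ t ∈ M.tris, ∑ σ ∈ M.intEdges.filter (fun σ => t.hasEdge σ), g t σ from by
    rw [← Finset.sum_add_distrib]
    apply Finset.sum_congr rfl
    intro t _
    rw [← Finset.sum_add_distrib]]
  have hflux : 0 ≤ ∑ t ∈ M.tris, ∑ σ ∈ M.intEdges.filter (fun σ => t.hasEdge σ),
      (‖v t‖^2 / 2) * (elen σ * unrm u t σ) := by
    apply Finset.sum_nonneg
    intro t ht
    rw [← Finset.mul_sum]
    exact mul_nonneg (by positivity) (M.flux_nonneg u hu t ht (hdiv t ht))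
  have hcross : ∑ t ∈ M.tris, ∑ σ ∈ M.intEdges.filter (fun σ => t.hasEdge σ), g t σ = 0 := by
    rw [Finset.sum_comm' (by
      intro t σ
      simp only [Finset.mem_filter]
      tauto : ∀ (t : Tri) (σ : E2 × E2), t ∈ M.tris ∧ σ ∈ M.intEdges.filter (fun σ => t.hasEdge σ)
        ↔ t ∈ M.tris.filter (fun t => t.hasEdge σ) ∧ σ ∈ M.intEdges)]
    apply Finset.sum_eq_zero
    intro σ hσ
    obtain ⟨hK1, hK2, hL1, hL2, hL3⟩ := M.int_spec σ hσ
    rw [M.filter_eq_of_int σ hσ, Finset.sum_insert (by simp [hL3]), Finset.sum_singleton]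
    simp only [hg]
    rw [M.other_K σ, M.other_L σ hσ, M.unrm_opp u hu σ hσ,
      real_max_neg_aux, real_min_neg_aux]
    ring
  rw [hcross, add_zero]
  exact hflux

end
end

section
/- The projected velocities belong to the Raviart–Thomas space: for every m ∈ {0,…,N}, u^m_h ∈ RT₀; equivalently, (u^m_{L_σ} − u^m_{K_σ})·n_{K_σ,σ} = 0 for every interior edge σ and u^m_{K_σ}·n_{K_σ,σ} = 0 for every boundary edge σ, and consequently div_h u^m_h = 0. -/
open scoped RealInnerProductSpace
open MeasureTheory

attribute [local instance] Classical.propDecidable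

noncomputable section

namespace Mesh

variable {Ω : Set E2} (M : Mesh Ω)

/-- Every edge is shared by exactly one or exactly two triangles. -/
lemma card_eq_one_or_two {σ : E2 × E2} (hσ : σ ∈ M.edges) :
    (M.tris.filter fun t => t.hasEdge σ).card = 1 ∨
      (M.tris.filter fun t => t.hasEdge σ).card = 2 := by
  have h2 := M.edges_atMostTwo σ hσ
  have h1 : 1 ≤ (M.tris.filter fun t => t.hasEdge σ).card := by
    obtain ⟨t, ht, hte⟩ := M.edges_sub σ hσ
    exact Finset.card_pos.mpr ⟨t, Finset.mem_filter.mpr ⟨ht, hte⟩⟩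
  omega

/-- An `RT₀` piecewise constant field has vanishing `div_h`-values. -/
lemma divhImage_eq_zero_of_RT0const {v : Tri → E2} (hv : M.IsRT0const v) :
    ∀ σ ∈ M.edges, M.divhImage v σ = 0 := by
  intro σ hσ
  rcases M.card_eq_one_or_two hσ with h1 | h2
  · have hext : σ ∈ M.extEdges := Finset.mem_filter.mpr ⟨hσ, h1⟩
    rw [Mesh.divhImage, if_neg (by omega), hv.2 σ hext, mul_zero, neg_zero]
  · have hint : σ ∈ M.intEdges := Finset.mem_filter.mpr ⟨hσ, h2⟩
    rw [Mesh.divhImage, if_pos h2, hv.1 σ hint, mul_zero]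

/-- Conversely, vanishing `div_h`-values imply membership in `RT₀`. -/
lemma RT0const_of_divhImage_eq_zero {v : Tri → E2}
    (hv : ∀ σ ∈ M.edges, M.divhImage v σ = 0) : M.IsRT0const v := by
  have hlen : ∀ σ ∈ M.edges, (0:ℝ) < elen σ := fun σ hσ =>
    dist_pos.mpr (M.edges_ne σ hσ)
  constructor
  · intro σ hσ
    obtain ⟨hσe, h2⟩ := Finset.mem_filter.mp hσ
    have h := hv σ hσe
    rw [Mesh.divhImage, if_pos h2] at h
    have hK : (0:ℝ) < (M.Kof σ).area := (M.Kof σ).area_pos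
    have hL : (0:ℝ) < (M.Lof σ).area := (M.Lof σ).area_pos
    have hc : (3 * elen σ / ((M.Kof σ).area + (M.Lof σ).area)) ≠ 0 :=
      ne_of_gt (div_pos (by linarith [hlen σ hσe]) (by linarith))
    exact (mul_eq_zero.mp h).resolve_left hc
  · intro σ hσ
    obtain ⟨hσe, h1⟩ := Finset.mem_filter.mp hσ
    have h := hv σ hσe
    rw [Mesh.divhImage, if_neg (by omega), neg_eq_zero] at h
    have hK : (0:ℝ) < (M.Kof σ).area := (M.Kof σ).area_pos
    have hc : (3 * elen σ / (M.Kof σ).area) ≠ 0 :=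
      ne_of_gt (div_pos (by linarith [hlen σ hσe]) hK)
    exact (mul_eq_zero.mp h).resolve_left hc

/-- Linearity of the `div_h`-values under the correction step. -/
lemma divhImage_sub_smul {v w g : Tri → E2} (c : ℝ)
    (hvw : ∀ t ∈ M.tris, v t = w t - c • g t) (σ : E2 × E2) (hσ : σ ∈ M.edges) :
    M.divhImage v σ = M.divhImage w σ - c * M.divhImage g σ := by
  have hK : M.Kof σ ∈ M.tris := (M.Kof_mem σ hσ).1
  have hvK := hvw _ hK
  rcases M.card_eq_one_or_two hσ with h1 | h2
  · rw [Mesh.divhImage, Mesh.divhImage, Mesh.divhImage, if_neg (by omega),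
      if_neg (by omega), if_neg (by omega), hvK]
    rw [inner_sub_left, real_inner_smul_left]
    ring
  · have hL : M.Lof σ ∈ M.tris := (M.Lof_mem σ hσ h2).1
    have hvL := hvw _ hL
    rw [Mesh.divhImage, Mesh.divhImage, Mesh.divhImage, if_pos h2, if_pos h2,
      if_pos h2, hvK, hvL]
    have : (w (M.Lof σ) - c • g (M.Lof σ)) - (w (M.Kof σ) - c • g (M.Kof σ))
        = (w (M.Lof σ) - w (M.Kof σ)) - c • (g (M.Lof σ) - g (M.Kof σ)) := by
      rw [smul_sub]; abel
    rw [this, inner_sub_left, real_inner_smul_left, inner_sub_left]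
    ring

end Mesh

/-- **The projected velocities belong to the Raviart–Thomas space**: for every
`m ∈ {0,…,N}`, `u^m_h ∈ RT₀`, i.e. `(u^m_{L_σ}−u^m_{K_σ})·n_{K_σ,σ} = 0` on interior
edges and `u^m_{K_σ}·n_{K_σ,σ} = 0` on boundary edges; consequently `div_h u^m_h = 0`. -/
theorem projected_velocity_in_RT0
    {Ω : Set E2} (hΩo : IsOpen Ω) (hΩc : IsConnected Ω) (hΩb : Bornology.IsBounded Ω)
    (M : Mesh Ω) (N : ℕ) (hN : 2 ≤ N) (k : ℝ) (hk : 0 < k)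
    (u ut : ℕ → Tri → E2) (p : ℕ → Tri → (E2 →ᵃ[ℝ] ℝ))
    (hu0 : M.IsRT0const (u 0)) (hu1 : M.IsRT0const (u 1))
    (hp : ∀ n, 1 ≤ n → n ≤ N → M.IsP1nc (p n) ∧ M.MeanZero (p n))
    (proj : ∀ n, 1 ≤ n → n + 1 ≤ N → ∀ σ ∈ M.edges,
      M.divhImage (fun s => gradA (p (n+1) s - p n s)) σ =
        (3 / (2 * k)) * M.divhImage (ut (n+1)) σ)
    (corr : ∀ n, 1 ≤ n → n + 1 ≤ N → ∀ t ∈ M.tris,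
      u (n+1) t = ut (n+1) t - (2 * k / 3) • gradA (p (n+1) t - p n t)) :
    ∀ m ≤ N, M.IsRT0const (u m) ∧ ∀ σ ∈ M.edges, M.divhImage (u m) σ = 0 := by
  intro m hm
  match m with
  | 0 => exact ⟨hu0, M.divhImage_eq_zero_of_RT0const hu0⟩
  | 1 => exact ⟨hu1, M.divhImage_eq_zero_of_RT0const hu1⟩
  | (n+2) =>
    have hn1 : 1 ≤ n + 1 := by omega
    have hnN : (n + 1) + 1 ≤ N := hm
    have hzero : ∀ σ ∈ M.edges, M.divhImage (u (n+2)) σ = 0 := by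
      intro σ hσ
      have hlin := M.divhImage_sub_smul (v := u (n+2)) (w := ut (n+2))
        (g := fun s => gradA (p (n+2) s - p (n+1) s)) (2 * k / 3)
        (corr (n+1) hn1 hnN) σ hσ
      have hproj := proj (n+1) hn1 hnN σ hσ
      have he : n + 1 + 1 = n + 2 := by omega
      rw [he] at hproj
      rw [hlin, hproj]
      have hk' : k ≠ 0 := ne_of_gt hk
      field_simp
      ring
    exact ⟨M.RT0const_of_divhImage_eq_zero hzero, hzero⟩

end
end
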